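/- In the setting of gluing sheaves: given sheaves F_λ, G_λ on the members U_λ of an open cover of X with gluing isomorphisms θ_{λμ}, ω_{λμ} respectively satisfying the cocycle conditions, and letting F, G be the glued sheaves with identifications η_λ : F|_{U_λ} ≅ F_λ and ζ_λ : G|_{U_λ} ≅ G_λ, the map u ↦ (ζ_λ ∘ u|_{U_λ} ∘ η_λ⁻¹) is a bijection between Hom(F, G) and the set of families (u_λ) ∈ ∏_λ Hom(F_λ, G_λ) satisfying ω_{λμ} ∘ u_μ = u_λ ∘ θ_{λμ} on U_λ ∩ U_μ for every pair (λ, μ). -/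

import Mathlib

open CategoryTheory CategoryTheory.Limits TopologicalSpace Opposite

universe u v w

/-- The sheaf axiom (F). -/
def IsSheafF {X : Type u} [TopologicalSpace X] {K : Type w} [Category.{v} K]
    (F : (Opens X)ᵒᵖ ⥤ K) : Prop :=
  ∀ ⦃ι : Type u⦄ (Uα : ι → Opens X) (T : K),
    (∀ f g : T ⟶ F.obj (op (iSup Uα)),
      (∀ i, f ≫ F.map (homOfLE (le_iSup Uα i)).op =
            g ≫ F.map (homOfLE (le_iSup Uα i)).op) → f = g) ∧
    (∀ fα : ∀ i, T ⟶ F.obj (op (Uα i)),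
      (∀ i j, fα i ≫ F.map (homOfLE (inf_le_left : Uα i ⊓ Uα j ≤ Uα i)).op =
              fα j ≫ F.map (homOfLE (inf_le_right : Uα i ⊓ Uα j ≤ Uα j)).op) →
      ∃ f : T ⟶ F.obj (op (iSup Uα)),
        ∀ i, f ≫ F.map (homOfLE (le_iSup Uα i)).op = fα i)
variable {X : Type u} [TopologicalSpace X] {K : Type w} [Category.{v} K]

/-- The opens of `X` contained in `U`; a model for the opens of the subspace `U`. -/
def OpensLe (U : Opens X) : Type u := {W : Opens X // W ≤ U}

instance (U : Opens X) : Preorder (OpensLe U) := Subtype.preorder _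

/-- For `V ≤ U`, opens contained in `V` are contained in `U`. -/
def leFunctor {V U : Opens X} (h : V ≤ U) : OpensLe V ⥤ OpensLe U :=
  Monotone.functor (f := fun W => ⟨W.1, W.2.trans h⟩) fun _ _ hab => hab

/-- Restriction of a presheaf on (the subspace) `U` to (the subspace) `V ≤ U`. -/
def resF {V U : Opens X} (h : V ≤ U) (F : (OpensLe U)ᵒᵖ ⥤ K) : (OpensLe V)ᵒᵖ ⥤ K :=
  (leFunctor h).op ⋙ F

/-- Restriction of a morphism of presheaves on `U` to `V ≤ U`. -/
def resNat {V U : Opens X} (h : V ≤ U) {F G : (OpensLe U)ᵒᵖ ⥤ K} (t : F ⟶ G) :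
    resF h F ⟶ resF h G :=
  Functor.whiskerLeft (leFunctor h).op t

/-- Restriction of an isomorphism of presheaves on `U` to `V ≤ U`. -/
def resIso {V U : Opens X} (h : V ≤ U) {F G : (OpensLe U)ᵒᵖ ⥤ K} (t : F ≅ G) :
    resF h F ≅ resF h G :=
  Functor.isoWhiskerLeft (leFunctor h).op t

/-- Restriction of a presheaf on `X` to (the subspace) `U`. -/
def resX (U : Opens X) (G : (Opens X)ᵒᵖ ⥤ K) : (OpensLe U)ᵒᵖ ⥤ K :=
  ((Monotone.functor (f := fun W : OpensLe U => W.1) fun _ _ h => h : OpensLe U ⥤ Opens X)).op ⋙ G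

/-- Restriction of a morphism of presheaves on `X` to `U`. -/
def resXNat (U : Opens X) {F G : (Opens X)ᵒᵖ ⥤ K} (t : F ⟶ G) : resX U F ⟶ resX U G :=
  Functor.whiskerLeft _ t

/-- Restriction of an isomorphism of presheaves on `X` to `U`. -/
def resXIso (U : Opens X) {F G : (Opens X)ᵒᵖ ⥤ K} (t : F ≅ G) : resX U F ≅ resX U G :=
  Functor.isoWhiskerLeft _ t

/-- The intersection of two opens contained in `U`, as an open contained in `U`. -/
def interLe {U : Opens X} (A B : OpensLe U) : OpensLe U :=
  ⟨A.1 ⊓ B.1, le_trans inf_le_left A.2⟩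

lemma interLe_le_left {U : Opens X} (A B : OpensLe U) : interLe A B ≤ A :=
  show A.1 ⊓ B.1 ≤ A.1 from inf_le_left

lemma interLe_le_right {U : Opens X} (A B : OpensLe U) : interLe A B ≤ B :=
  show A.1 ⊓ B.1 ≤ B.1 from inf_le_right

/-- The union of a family of opens contained in `U`, as an open contained in `U`. -/
def supLe {U : Opens X} {ι : Type u} (Wα : ι → OpensLe U) : OpensLe U :=
  ⟨⨆ i, (Wα i).1, iSup_le fun i => (Wα i).2⟩

lemma le_supLe {U : Opens X} {ι : Type u} (Wα : ι → OpensLe U) (i : ι) :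
    Wα i ≤ supLe Wα :=
  show (Wα i).1 ≤ ⨆ i, (Wα i).1 from le_iSup (fun i => (Wα i).1) i

/-- The sheaf axiom for a presheaf on (the opens contained in) `U`. -/
def IsSheafLe {U : Opens X} (F : (OpensLe U)ᵒᵖ ⥤ K) : Prop :=
  ∀ ⦃ι : Type u⦄ (Wα : ι → OpensLe U) (T : K),
    (∀ f g : T ⟶ F.obj (op (supLe Wα)),
      (∀ i, f ≫ F.map (homOfLE (le_supLe Wα i)).op =
            g ≫ F.map (homOfLE (le_supLe Wα i)).op) →
      f = g) ∧
    (∀ fα : ∀ i, T ⟶ F.obj (op (Wα i)),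
      (∀ i j, fα i ≫ F.map (homOfLE (interLe_le_left (Wα i) (Wα j))).op =
              fα j ≫ F.map (homOfLE (interLe_le_right (Wα i) (Wα j))).op) →
      ∃ f : T ⟶ F.obj (op (supLe Wα)),
        ∀ i, f ≫ F.map (homOfLE (le_supLe Wα i)).op = fα i)


section Aux

variable {X : Type u} [TopologicalSpace X] {K : Type w} [Category.{v} K]

/-- Auxiliary gluing lemma: a compatible family of local components of a morphism
`FF ⟶ GG` glues uniquely to a morphism. -/
theorem aux_glue {L : Type u} (U : L → Opens X) (hcov : (⨆ l, U l) = ⊤)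
    (FF GG : (Opens X)ᵒᵖ ⥤ K) (hGG : IsSheafF GG)
    (v : ∀ l (W : OpensLe (U l)), FF.obj (op W.1) ⟶ GG.obj (op W.1))
    (hv_nat : ∀ l (W W' : OpensLe (U l)) (h : W' ≤ W),
      FF.map (homOfLE (h : W'.1 ≤ W.1)).op ≫ v l W' =
        v l W ≫ GG.map (homOfLE (h : W'.1 ≤ W.1)).op)
    (hv_glue : ∀ l m (W : Opens X) (hl : W ≤ U l) (hm : W ≤ U m),
      v l ⟨W, hl⟩ = v m ⟨W, hm⟩) :
    ∃! u : FF ⟶ GG, ∀ l (W : OpensLe (U l)), u.app (op W.1) = v l W := by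
  have hsup : ∀ V : Opens X, (⨆ l, V ⊓ U l) = V := by
    intro V; rw [← inf_iSup_eq, hcov, inf_top_eq]
  have e_map : ∀ {A B : Opens X} (e : A = B),
      GG.map (homOfLE e.le).op = eqToHom (by rw [e]) := by
    intro A B e; subst e
    have : (homOfLE (le_refl A)).op = 𝟙 (op A) := rfl
    rw [this, GG.map_id]; rfl
  have mapGG : ∀ {A B C : Opens X} (h1 : A ≤ B) (h2 : B ≤ C),
      GG.map (homOfLE h2).op ≫ GG.map (homOfLE h1).op =
        GG.map (homOfLE (h1.trans h2)).op := by
    intro A B C h1 h2; rw [← GG.map_comp]; rfl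
  have mapFF : ∀ {A B C : Opens X} (h1 : A ≤ B) (h2 : B ≤ C),
      FF.map (homOfLE h2).op ≫ FF.map (homOfLE h1).op =
        FF.map (homOfLE (h1.trans h2)).op := by
    intro A B C h1 h2; rw [← FF.map_comp]; rfl
  -- separation for GG with respect to the covering of V by the V ⊓ U l
  have hsep : ∀ (V : Opens X) (T : K) (g g' : T ⟶ GG.obj (op V)),
      (∀ l, g ≫ GG.map (homOfLE (inf_le_left : V ⊓ U l ≤ V)).op =
            g' ≫ GG.map (homOfLE (inf_le_left : V ⊓ U l ≤ V)).op) → g = g' := by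
    intro V T g g' hg
    have h := hsup V
    have key := (hGG (fun l => V ⊓ U l) T).1
      (g ≫ GG.map (homOfLE h.le).op) (g' ≫ GG.map (homOfLE h.le).op) ?_
    · rw [e_map h] at key
      rwa [cancel_mono] at key
    · intro l
      simp only [Category.assoc, mapGG]
      exact hg l
  -- the key restriction computation
  have hres : ∀ (l : L) (A B : Opens X) (hA : A ≤ U l) (hB : B ≤ U l)
      (hAB : A ≤ B) (C : Opens X) (hBC : B ≤ C),
      (FF.map (homOfLE hBC).op ≫ v l ⟨B, hB⟩) ≫ GG.map (homOfLE hAB).op =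
        FF.map (homOfLE (hAB.trans hBC)).op ≫ v l ⟨A, hA⟩ := by
    intro l A B hA hB hAB C hBC
    calc (FF.map (homOfLE hBC).op ≫ v l ⟨B, hB⟩) ≫ GG.map (homOfLE hAB).op
        = FF.map (homOfLE hBC).op ≫ (v l ⟨B, hB⟩ ≫ GG.map (homOfLE hAB).op) :=
          Category.assoc _ _ _
      _ = FF.map (homOfLE hBC).op ≫ (FF.map (homOfLE hAB).op ≫ v l ⟨A, hA⟩) :=
          congrArg _ (hv_nat l ⟨B, hB⟩ ⟨A, hA⟩ hAB).symm
      _ = (FF.map (homOfLE hBC).op ≫ FF.map (homOfLE hAB).op) ≫ v l ⟨A, hA⟩ :=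
          (Category.assoc _ _ _).symm
      _ = FF.map (homOfLE (hAB.trans hBC)).op ≫ v l ⟨A, hA⟩ :=
          congrArg (· ≫ v l ⟨A, hA⟩) (mapFF hAB hBC)
  -- existence of local glued maps
  have hex : ∀ V : Opens X, ∃ g : FF.obj (op V) ⟶ GG.obj (op V),
      ∀ l, g ≫ GG.map (homOfLE (inf_le_left : V ⊓ U l ≤ V)).op =
        FF.map (homOfLE (inf_le_left : V ⊓ U l ≤ V)).op ≫
          v l ⟨V ⊓ U l, inf_le_right⟩ := by
    intro V
    have h := hsup V
    have hfam : ∀ l m : L,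
        (FF.map (homOfLE (inf_le_left : V ⊓ U l ≤ V)).op ≫
            v l ⟨V ⊓ U l, inf_le_right⟩) ≫
          GG.map (homOfLE (inf_le_left : (V ⊓ U l) ⊓ (V ⊓ U m) ≤ V ⊓ U l)).op =
        (FF.map (homOfLE (inf_le_left : V ⊓ U m ≤ V)).op ≫
            v m ⟨V ⊓ U m, inf_le_right⟩) ≫
          GG.map (homOfLE (inf_le_right : (V ⊓ U l) ⊓ (V ⊓ U m) ≤ V ⊓ U m)).op := by
      intro l m
      have hWl : (V ⊓ U l) ⊓ (V ⊓ U m) ≤ U l := le_trans inf_le_left inf_le_right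
      have hWm : (V ⊓ U l) ⊓ (V ⊓ U m) ≤ U m := le_trans inf_le_right inf_le_right
      calc (FF.map (homOfLE (inf_le_left : V ⊓ U l ≤ V)).op ≫
              v l ⟨V ⊓ U l, inf_le_right⟩) ≫
            GG.map (homOfLE (inf_le_left : (V ⊓ U l) ⊓ (V ⊓ U m) ≤ V ⊓ U l)).op
          = FF.map (homOfLE (le_trans (inf_le_left :
              (V ⊓ U l) ⊓ (V ⊓ U m) ≤ V ⊓ U l) inf_le_left)).op ≫
              v l ⟨(V ⊓ U l) ⊓ (V ⊓ U m), hWl⟩ :=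
            hres l _ _ hWl inf_le_right inf_le_left V inf_le_left
        _ = FF.map (homOfLE (le_trans (inf_le_left :
              (V ⊓ U l) ⊓ (V ⊓ U m) ≤ V ⊓ U l) inf_le_left)).op ≫
              v m ⟨(V ⊓ U l) ⊓ (V ⊓ U m), hWm⟩ :=
            congrArg _ (hv_glue l m _ hWl hWm)
        _ = (FF.map (homOfLE (inf_le_left : V ⊓ U m ≤ V)).op ≫
              v m ⟨V ⊓ U m, inf_le_right⟩) ≫
            GG.map (homOfLE (inf_le_right : (V ⊓ U l) ⊓ (V ⊓ U m) ≤ V ⊓ U m)).op :=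
            (hres m _ _ hWm inf_le_right inf_le_right V inf_le_left).symm
    obtain ⟨f, hf⟩ := (hGG (fun l => V ⊓ U l) (FF.obj (op V))).2
      (fun l => FF.map (homOfLE (inf_le_left : V ⊓ U l ≤ V)).op ≫
        v l ⟨V ⊓ U l, inf_le_right⟩) hfam
    refine ⟨f ≫ eqToHom (by rw [h]), fun l => ?_⟩
    have e : eqToHom (show GG.obj (op (⨆ l, V ⊓ U l)) = GG.obj (op V) by rw [h]) ≫
        GG.map (homOfLE (inf_le_left : V ⊓ U l ≤ V)).op =
        GG.map (homOfLE (le_iSup (fun l => V ⊓ U l) l)).op := by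
      rw [← e_map h.symm, mapGG]
    rw [Category.assoc, e]
    exact hf l
  choose w hw using hex
  -- naturality of w
  have hw_nat : ∀ {V V' : Opens X} (h : V' ≤ V),
      FF.map (homOfLE h).op ≫ w V' = w V ≫ GG.map (homOfLE h).op := by
    intro V V' h
    apply hsep V'
    intro l
    calc (FF.map (homOfLE h).op ≫ w V') ≫
          GG.map (homOfLE (inf_le_left : V' ⊓ U l ≤ V')).op
        = FF.map (homOfLE h).op ≫
            (w V' ≫ GG.map (homOfLE (inf_le_left : V' ⊓ U l ≤ V')).op) :=
          Category.assoc _ _ _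
      _ = FF.map (homOfLE h).op ≫
            (FF.map (homOfLE (inf_le_left : V' ⊓ U l ≤ V')).op ≫
              v l ⟨V' ⊓ U l, inf_le_right⟩) :=
          congrArg _ (hw V' l)
      _ = (FF.map (homOfLE h).op ≫
            FF.map (homOfLE (inf_le_left : V' ⊓ U l ≤ V')).op) ≫
              v l ⟨V' ⊓ U l, inf_le_right⟩ :=
          (Category.assoc _ _ _).symm
      _ = FF.map (homOfLE (le_trans (inf_le_left : V' ⊓ U l ≤ V') h)).op ≫
            v l ⟨V' ⊓ U l, inf_le_right⟩ :=
          congrArg (· ≫ v l ⟨V' ⊓ U l, inf_le_right⟩) (mapFF _ h)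
      _ = (FF.map (homOfLE (inf_le_left : V ⊓ U l ≤ V)).op ≫
            v l ⟨V ⊓ U l, inf_le_right⟩) ≫
            GG.map (homOfLE (inf_le_inf_right (U l) h : V' ⊓ U l ≤ V ⊓ U l)).op :=
          (hres l _ _ inf_le_right inf_le_right (inf_le_inf_right (U l) h) V
            inf_le_left).symm
      _ = (w V ≫ GG.map (homOfLE (inf_le_left : V ⊓ U l ≤ V)).op) ≫
            GG.map (homOfLE (inf_le_inf_right (U l) h : V' ⊓ U l ≤ V ⊓ U l)).op :=
          congrArg (· ≫ GG.map (homOfLE (inf_le_inf_right (U l) h :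
            V' ⊓ U l ≤ V ⊓ U l)).op) (hw V l).symm
      _ = w V ≫ (GG.map (homOfLE (inf_le_left : V ⊓ U l ≤ V)).op ≫
            GG.map (homOfLE (inf_le_inf_right (U l) h : V' ⊓ U l ≤ V ⊓ U l)).op) :=
          Category.assoc _ _ _
      _ = w V ≫ GG.map (homOfLE (le_trans (inf_le_inf_right (U l) h :
            V' ⊓ U l ≤ V ⊓ U l) (inf_le_left : V ⊓ U l ≤ V))).op :=
          congrArg _ (mapGG _ _)
      _ = w V ≫ (GG.map (homOfLE h).op ≫
            GG.map (homOfLE (inf_le_left : V' ⊓ U l ≤ V')).op) :=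
          congrArg _ (mapGG (inf_le_left : V' ⊓ U l ≤ V') h).symm
      _ = (w V ≫ GG.map (homOfLE h).op) ≫
            GG.map (homOfLE (inf_le_left : V' ⊓ U l ≤ V')).op :=
          (Category.assoc _ _ _).symm
  refine ⟨⟨fun V => w (unop V), ?_⟩, fun l W => ?_, fun u' hu' => ?_⟩
  · intro A B f
    exact hw_nat f.unop.le
  · -- characterization: w W.1 = v l W
    apply hsep W.1
    intro m
    have hm : W.1 ⊓ U m ≤ U l := le_trans inf_le_left W.2
    calc w W.1 ≫ GG.map (homOfLE (inf_le_left : W.1 ⊓ U m ≤ W.1)).op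
        = FF.map (homOfLE (inf_le_left : W.1 ⊓ U m ≤ W.1)).op ≫
            v m ⟨W.1 ⊓ U m, inf_le_right⟩ := hw W.1 m
      _ = FF.map (homOfLE (inf_le_left : W.1 ⊓ U m ≤ W.1)).op ≫
            v l ⟨W.1 ⊓ U m, hm⟩ :=
          congrArg _ (hv_glue m l _ inf_le_right hm)
      _ = v l W ≫ GG.map (homOfLE (inf_le_left : W.1 ⊓ U m ≤ W.1)).op :=
          hv_nat l W ⟨W.1 ⊓ U m, hm⟩
            (show W.1 ⊓ U m ≤ W.1 from inf_le_left)
  · -- uniqueness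
    apply NatTrans.ext
    funext V
    show u'.app V = w (unop V)
    apply hsep (unop V)
    intro l
    calc u'.app V ≫ GG.map (homOfLE (inf_le_left : unop V ⊓ U l ≤ unop V)).op
        = FF.map (homOfLE (inf_le_left : unop V ⊓ U l ≤ unop V)).op ≫
            u'.app (op (unop V ⊓ U l)) :=
          (u'.naturality (homOfLE (inf_le_left : unop V ⊓ U l ≤ unop V)).op).symm
      _ = FF.map (homOfLE (inf_le_left : unop V ⊓ U l ≤ unop V)).op ≫
            v l ⟨unop V ⊓ U l, inf_le_right⟩ :=
          congrArg _ (hu' l ⟨unop V ⊓ U l, inf_le_right⟩)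
      _ = w (unop V) ≫ GG.map (homOfLE (inf_le_left : unop V ⊓ U l ≤ unop V)).op :=
          (hw (unop V) l).symm

end Aux

/-- Morphisms between glued sheaves correspond bijectively to families of morphisms
between the local sheaves commuting with the gluing isomorphisms. -/
theorem hom_glued_bijective {X : Type u} [TopologicalSpace X] {K : Type w}
    [Category.{v} K] [HasLimitsOfSize.{u, u} K] {L : Type u} (U : L → Opens X)
    (hcov : (⨆ l, U l) = ⊤)
    (F G : ∀ l, (OpensLe (U l))ᵒᵖ ⥤ K)
    (hF : ∀ l, IsSheafLe (F l)) (hG : ∀ l, IsSheafLe (G l))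
    (θ : ∀ l m, resF (inf_le_right : U l ⊓ U m ≤ U m) (F m) ≅
                resF (inf_le_left : U l ⊓ U m ≤ U l) (F l))
    (ω : ∀ l m, resF (inf_le_right : U l ⊓ U m ≤ U m) (G m) ≅
                resF (inf_le_left : U l ⊓ U m ≤ U l) (G l))
    (FF GG : (Opens X)ᵒᵖ ⥤ K) (hFF : IsSheafF FF) (hGG : IsSheafF GG)
    (η : ∀ l, resX (U l) FF ≅ F l) (ζ : ∀ l, resX (U l) GG ≅ G l)
    (hη : ∀ l m, θ l m =
      (resIso (inf_le_right : U l ⊓ U m ≤ U m) (η m)).symm ≪≫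
        resIso (inf_le_left : U l ⊓ U m ≤ U l) (η l))
    (hζ : ∀ l m, ω l m =
      (resIso (inf_le_right : U l ⊓ U m ≤ U m) (ζ m)).symm ≪≫
        resIso (inf_le_left : U l ⊓ U m ≤ U l) (ζ l)) :
    (∀ u : FF ⟶ GG, ∀ l m,
      resNat (inf_le_right : U l ⊓ U m ≤ U m)
          ((η m).inv ≫ resXNat (U m) u ≫ (ζ m).hom) ≫ (ω l m).hom =
        (θ l m).hom ≫
          resNat (inf_le_left : U l ⊓ U m ≤ U l)
            ((η l).inv ≫ resXNat (U l) u ≫ (ζ l).hom)) ∧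
    (∀ uα : ∀ l, F l ⟶ G l,
      (∀ l m, resNat (inf_le_right : U l ⊓ U m ≤ U m) (uα m) ≫ (ω l m).hom =
        (θ l m).hom ≫ resNat (inf_le_left : U l ⊓ U m ≤ U l) (uα l)) →
      ∃! u : FF ⟶ GG, ∀ l, (η l).inv ≫ resXNat (U l) u ≫ (ζ l).hom = uα l) := by
  
  constructor
  · intro u l m
    rw [hη, hζ]
    ext W
    simp [resNat, resIso, resXNat, resF, resX, leFunctor, Monotone.functor]
    exact (congrArg (fun t => (η m).inv.app _ ≫ u.app _ ≫ t)
      (Iso.hom_inv_id_app_assoc (ζ m) _ _)).trans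
      (congrArg (fun t => (η m).inv.app _ ≫ t) (Iso.hom_inv_id_app_assoc (η l) _ _)).symm
  · intro uα hcompat
    have hv_nat : ∀ l (W W' : OpensLe (U l)) (h : W' ≤ W),
        FF.map (homOfLE (h : W'.1 ≤ W.1)).op ≫
          ((η l).hom.app (op W') ≫ (uα l).app (op W') ≫ (ζ l).inv.app (op W')) =
        ((η l).hom.app (op W) ≫ (uα l).app (op W) ≫ (ζ l).inv.app (op W)) ≫
          GG.map (homOfLE (h : W'.1 ≤ W.1)).op := by
      intro l W W' h
      have h1 : FF.map (homOfLE (h : W'.1 ≤ W.1)).op ≫ (η l).hom.app (op W') =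
          (η l).hom.app (op W) ≫ (F l).map (homOfLE h).op :=
        (η l).hom.naturality (homOfLE h).op
      have h2 : (F l).map (homOfLE h).op ≫ (uα l).app (op W') =
          (uα l).app (op W) ≫ (G l).map (homOfLE h).op :=
        (uα l).naturality (homOfLE h).op
      have h3 : (G l).map (homOfLE h).op ≫ (ζ l).inv.app (op W') =
          (ζ l).inv.app (op W) ≫ GG.map (homOfLE (h : W'.1 ≤ W.1)).op :=
        (ζ l).inv.naturality (homOfLE h).op
      exact (Category.assoc _ _ _).symm.trans ((h1 =≫ _).trans ((Category.assoc _ _ _).trans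
        (congrArg (_ ≫ ·) ((Category.assoc _ _ _).symm.trans ((h2 =≫ _).trans
          ((Category.assoc _ _ _).trans (congrArg (_ ≫ ·) h3))))))) |>.trans
        ((Category.assoc _ _ _).trans (congrArg (_ ≫ ·) (Category.assoc _ _ _))).symm
    have hv_glue : ∀ l m (W : Opens X) (hl : W ≤ U l) (hm : W ≤ U m),
        (η l).hom.app (op (⟨W, hl⟩ : OpensLe (U l))) ≫
          (uα l).app (op (⟨W, hl⟩ : OpensLe (U l))) ≫
          (ζ l).inv.app (op (⟨W, hl⟩ : OpensLe (U l))) =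
        (η m).hom.app (op (⟨W, hm⟩ : OpensLe (U m))) ≫
          (uα m).app (op (⟨W, hm⟩ : OpensLe (U m))) ≫
          (ζ m).inv.app (op (⟨W, hm⟩ : OpensLe (U m))) := by
      intro l m W hl hm
      have hc := hcompat l m
      rw [hη, hζ] at hc
      have hc'' : (uα m).app (op (⟨W, hm⟩ : OpensLe (U m))) ≫
            ((ζ m).inv.app (op (⟨W, hm⟩ : OpensLe (U m))) ≫
              (ζ l).hom.app (op (⟨W, hl⟩ : OpensLe (U l)))) =
          ((η m).inv.app (op (⟨W, hm⟩ : OpensLe (U m))) ≫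
            (η l).hom.app (op (⟨W, hl⟩ : OpensLe (U l)))) ≫
            (uα l).app (op (⟨W, hl⟩ : OpensLe (U l))) :=
        congrArg (fun t => t.app (op (⟨W, le_inf hl hm⟩ : OpensLe (U l ⊓ U m)))) hc
      have hz : (ζ m).inv.app (op (⟨W, hm⟩ : OpensLe (U m))) ≫
          ((ζ l).hom.app (op (⟨W, hl⟩ : OpensLe (U l))) ≫
            (ζ l).inv.app (op (⟨W, hl⟩ : OpensLe (U l)))) =
          (ζ m).inv.app (op (⟨W, hm⟩ : OpensLe (U m))) := by
        have h0 : (ζ l).hom.app (op (⟨W, hl⟩ : OpensLe (U l))) ≫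
            (ζ l).inv.app (op (⟨W, hl⟩ : OpensLe (U l))) = 𝟙 _ :=
          Iso.hom_inv_id_app _ _
        exact (congrArg (_ ≫ ·) h0).trans (Category.comp_id _)
      refine Eq.trans (b := (η m).hom.app (op (⟨W, hm⟩ : OpensLe (U m))) ≫
                (((η m).inv.app (op (⟨W, hm⟩ : OpensLe (U m))) ≫
                  (η l).hom.app (op (⟨W, hl⟩ : OpensLe (U l)))) ≫
                  (uα l).app (op (⟨W, hl⟩ : OpensLe (U l)))) ≫
                (ζ l).inv.app (op (⟨W, hl⟩ : OpensLe (U l)))) ?_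
        (Eq.trans (b := (η m).hom.app (op (⟨W, hm⟩ : OpensLe (U m))) ≫
                ((uα m).app (op (⟨W, hm⟩ : OpensLe (U m))) ≫
                  ((ζ m).inv.app (op (⟨W, hm⟩ : OpensLe (U m))) ≫
                  (ζ l).hom.app (op (⟨W, hl⟩ : OpensLe (U l))))) ≫
                (ζ l).inv.app (op (⟨W, hl⟩ : OpensLe (U l)))) ?_ ?_)
      · exact (Iso.hom_inv_id_app_assoc (η m) _ _).symm.trans
          (congrArg ((η m).hom.app (op (⟨W, hm⟩ : OpensLe (U m))) ≫ ·)
            ((Category.assoc _ _ _).trans (Category.assoc _ _ _)).symm)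
      · exact congrArg (fun t => (η m).hom.app (op (⟨W, hm⟩ : OpensLe (U m))) ≫ t ≫
          (ζ l).inv.app (op (⟨W, hl⟩ : OpensLe (U l)))) hc''.symm
      · refine (congrArg ((η m).hom.app (op (⟨W, hm⟩ : OpensLe (U m))) ≫ ·)
          (Category.assoc ((uα m).app (op (⟨W, hm⟩ : OpensLe (U m))))
            ((ζ m).inv.app (op (⟨W, hm⟩ : OpensLe (U m))) ≫
              (ζ l).hom.app (op (⟨W, hl⟩ : OpensLe (U l))))
            ((ζ l).inv.app (op (⟨W, hl⟩ : OpensLe (U l)))))).trans ?_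
        exact congrArg (fun t => (η m).hom.app (op (⟨W, hm⟩ : OpensLe (U m))) ≫
          (uα m).app (op (⟨W, hm⟩ : OpensLe (U m))) ≫ t)
          ((Category.assoc _ _ _).trans hz)
    obtain ⟨u, hchar, huniq⟩ := aux_glue U hcov FF GG hGG
      (fun l W => (η l).hom.app (op W) ≫ (uα l).app (op W) ≫ (ζ l).inv.app (op W))
      hv_nat hv_glue
    refine ⟨u, fun l => ?_, fun u' hu' => ?_⟩
    · apply NatTrans.ext
      funext W
      obtain ⟨W⟩ := W
      have h1 := hchar l W
      show (η l).inv.app (op W) ≫ u.app (op W.1) ≫ (ζ l).hom.app (op W) =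
        (uα l).app (op W)
      rw [h1]
      exact (congrArg ((η l).inv.app (op W) ≫ ·) ((Category.assoc _ _ _).trans
        (congrArg ((η l).hom.app (op W) ≫ ·) (Category.assoc _ _ _)))).trans
        ((Iso.inv_hom_id_app_assoc (η l) _ _).trans
          ((congrArg ((uα l).app (op W) ≫ ·) (Iso.inv_hom_id_app (ζ l) _)).trans
            (Category.comp_id _)))
    · refine huniq u' (fun l W => ?_)
      have h2 : (η l).inv.app (op W) ≫ u'.app (op W.1) ≫ (ζ l).hom.app (op W) =
          (uα l).app (op W) :=
        congrArg (fun t => t.app (op W)) (hu' l)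
      have h5 : (ζ l).hom.app (op W) ≫ (ζ l).inv.app (op W) = 𝟙 _ :=
        Iso.hom_inv_id_app _ _
      have h3 : (η l).hom.app (op W) ≫
          ((η l).inv.app (op W) ≫ u'.app (op W.1) ≫ (ζ l).hom.app (op W)) ≫
          (ζ l).inv.app (op W) = u'.app (op W.1) := by
        exact (congrArg ((η l).hom.app (op W) ≫ ·) ((Category.assoc _ _ _).trans
          (congrArg ((η l).inv.app (op W) ≫ ·) ((Category.assoc _ _ _).trans
            ((congrArg (u'.app (op W.1) ≫ ·) h5).trans (Category.comp_id _)))))).trans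
          (Iso.hom_inv_id_app_assoc (η l) _ _)
      exact h3.symm.trans (congrArg (fun t => (η l).hom.app (op W) ≫ t ≫ (ζ l).inv.app (op W)) h2)
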